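/- Fix a ≥ 2 and a constant 0 < r < a·H_a. If n = ⌊rk⌋, then the probability that a uniformly random string of length n over [a] is k-omni tends to 0 as k → ∞. -/

import Mathlib

open Finset Filter
open scoped Classical

section OmniAux

variable {a : ℕ}

def bl (a : ℕ) (seen : Finset (Fin a)) : List (Fin a) → ℕ
  | [] => 0
  | c :: s => if insert c seen = Finset.univ then bl a ∅ s + 1 else bl a (insert c seen) s

lemma sublist_of_cons_sublist {c : Fin a} {w p s : List (Fin a)} (hc : c ∉ p)
    (h : (c :: w).Sublist (p ++ c :: s)) : w.Sublist s := by
  induction p with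
  | nil => exact List.cons_sublist_cons.mp h
  | cons x p ih =>
    rw [List.cons_append] at h
    cases h with
    | cons _ h => exact ih (fun hm => hc (List.mem_cons_of_mem _ hm)) h
    | cons_cons _ h => exact absurd List.mem_cons_self hc


lemma bl_append : ∀ (p t : List (Fin a)) (seen : Finset (Fin a)),
    (∀ q : List (Fin a), q ≠ [] → q.IsPrefix p → seen ∪ q.toFinset ≠ Finset.univ) →
    bl a seen (p ++ t) = bl a (seen ∪ p.toFinset) t := by
  intro p
  induction p with
  | nil => intro t seen _; simp
  | cons c p ih =>
    intro t seen h
    have h1 : insert c seen ≠ univ := by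
      have := h [c] (by simp) ⟨p, rfl⟩
      rw [List.toFinset_cons, List.toFinset_nil, Finset.union_insert, Finset.union_empty] at this; exact this
    rw [List.cons_append]
    show bl a seen (c :: (p ++ t)) = _
    rw [bl, if_neg h1, ih t (insert c seen) ?_]
    · congr 1
      rw [List.toFinset_cons, Finset.union_insert, Finset.insert_union]
    · intro q hq hqp
      obtain ⟨u, rfl⟩ := hqp
      have := h (c :: q) (by simp) ⟨u, rfl⟩
      rw [List.toFinset_cons, Finset.union_insert, ← Finset.insert_union] at this
      exact this

lemma bl_eq_zero (ha : 2 ≤ a) {s : List (Fin a)} {c : Fin a} (hc : c ∉ s) : bl a ∅ s = 0 := by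
  have := bl_append s [] ∅ ?_
  · rw [List.append_nil] at this; rw [this]; rfl
  · intro q hq hqp heq
    have : c ∈ q.toFinset := by rw [Finset.empty_union] at heq; rw [heq]; exact Finset.mem_univ c
    exact hc (hqp.subset (List.mem_toFinset.mp this))

lemma exists_bad (ha : 2 ≤ a) : ∀ (n : ℕ) (s : List (Fin a)), s.length ≤ n →
    ∃ w : List (Fin a), w.length = bl a ∅ s + 1 ∧ ¬ w.Sublist s := by
  have ha0 : 0 < a := by omega
  intro n
  induction n with
  | zero =>
    intro s hs
    have : s = [] := List.length_eq_zero_iff.mp (Nat.le_zero.mp hs)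
    subst this
    exact ⟨[⟨0, ha0⟩], by simp [bl], by simp⟩
  | succ n ihn =>
    intro s hs
    by_cases hall : ∀ c : Fin a, c ∈ s
    · have hex : ∃ m, Finset.univ ⊆ (s.take m).toFinset :=
        ⟨s.length, by rw [List.take_length]; intro c _; exact List.mem_toFinset.mpr (hall c)⟩
      have hm : univ ⊆ (s.take (Nat.find hex)).toFinset := Nat.find_spec hex
      have hm0 : Nat.find hex ≠ 0 := by
        intro h0
        rw [h0] at hm; simp at hm
        have : Nonempty (Fin a) := ⟨⟨0, ha0⟩⟩
        exact Finset.univ_nonempty.ne_empty hm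
      obtain ⟨m', hm'⟩ : ∃ m', Nat.find hex = m' + 1 := ⟨Nat.find hex - 1, by omega⟩
      rw [hm'] at hm
      have hmin : ¬ univ ⊆ (s.take m').toFinset := Nat.find_min hex (by omega)
      have hlt : m' < s.length := by
        by_contra hge; push_neg at hge
        exact hmin (by rw [List.take_of_length_le hge]; intro c _; exact List.mem_toFinset.mpr (hall c))
      set c := s[m'] with hcdef
      set p := s.take m' with hpdef
      set rest := s.drop (m' + 1) with hrdef
      have hplen : p.length = m' := List.length_take_of_le (le_of_lt hlt)
      have hsplit : s = p ++ c :: rest := by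
        conv_lhs => rw [← List.take_append_drop m' s]
        rw [List.drop_eq_getElem_cons hlt]
      have htake : s.take (m' + 1) = p ++ [c] := by
        conv_lhs => rw [hsplit]
        rw [List.take_append, List.take_of_length_le (by omega), hplen]
        simp
      have hcover : insert c p.toFinset = univ := by
        apply Finset.univ_subset_iff.mp
        intro y hy
        have h2 := hm hy
        rw [htake] at h2
        simp only [List.toFinset_append, List.toFinset_cons, List.toFinset_nil,
          Finset.mem_union, List.mem_toFinset, Finset.mem_insert, Finset.notMem_empty,
          or_false] at h2
        rcases h2 with h2 | h2
        · exact Finset.mem_insert_of_mem (List.mem_toFinset.mpr h2)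
        · exact Finset.mem_insert.mpr (Or.inl h2)
      have hcp : c ∉ p := by
        intro hmem
        apply hmin
        rw [← hcover, Finset.insert_eq_self.mpr (List.mem_toFinset.mpr hmem)]
      have hbl : bl a ∅ s = bl a ∅ rest + 1 := by
        conv_lhs => rw [hsplit]
        rw [bl_append p (c :: rest) ∅ ?_]
        · rw [Finset.empty_union]
          show (if insert c p.toFinset = Finset.univ then bl a ∅ rest + 1 else _) = _
          rw [if_pos hcover]
        · intro q hq hqp heq
          apply hmin
          rw [Finset.empty_union] at heq
          rw [← heq]
          intro y hy
          exact List.mem_toFinset.mpr (hqp.subset (List.mem_toFinset.mp hy))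
      have hrl : rest.length ≤ n := by
        have := congrArg List.length hsplit
        simp [hplen] at this
        omega
      obtain ⟨w₂, hw₂, hns₂⟩ := ihn rest hrl
      refine ⟨c :: w₂, by simp [hw₂, hbl], ?_⟩
      intro hsub
      rw [hsplit] at hsub
      exact hns₂ (sublist_of_cons_sublist hcp hsub)
    · push_neg at hall
      obtain ⟨c, hc⟩ := hall
      exact ⟨[c], by simp [bl_eq_zero ha hc], by simpa using hc⟩

lemma omni_le_bl (ha : 2 ≤ a) (s : List (Fin a)) (k : ℕ)
    (h : ∀ T : List (Fin a), T.length = k → T.Sublist s) : k ≤ bl a ∅ s := by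
  by_contra hlt
  push_neg at hlt
  obtain ⟨w, hw, hns⟩ := exists_bad ha s.length s le_rfl
  have hwk : w.length ≤ k := by omega
  have hsub : (w ++ List.replicate (k - w.length) (⟨0, by omega⟩ : Fin a)).Sublist s :=
    h _ (by simp; omega)
  exact hns ((List.sublist_append_left _ _).trans hsub)


noncomputable def cnt (a n k : ℕ) (seen : Finset (Fin a)) : ℕ :=
  (Finset.univ.filter (fun S : Fin n → Fin a => k ≤ bl a seen (List.ofFn S))).card

lemma card_filter_succ (n : ℕ) (P : List (Fin a) → Prop) [∀ l, Decidable (P l)] :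
    (univ.filter fun S : Fin (n+1) → Fin a => P (List.ofFn S)).card
      = ∑ c : Fin a, (univ.filter fun S : Fin n → Fin a => P (c :: List.ofFn S)).card := by
  have key : Fintype.card {S : Fin (n+1) → Fin a // P (List.ofFn S)}
      = ∑ c : Fin a, Fintype.card {S : Fin n → Fin a // P (c :: List.ofFn S)} := by
    rw [← Fintype.card_sigma]
    apply Fintype.card_congr
    refine (Equiv.subtypeEquiv (Fin.consEquiv fun _ : Fin (n+1) => Fin a).symm fun S => ?_).trans
      (Equiv.subtypeProdEquivSigmaSubtype (fun (c : Fin a) (S' : Fin n → Fin a) => P (c :: List.ofFn S')))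
    rw [List.ofFn_succ]
    exact Iff.rfl
  simpa [Fintype.card_subtype] using key

lemma cnt_zero (n : ℕ) (seen : Finset (Fin a)) : cnt a n 0 seen = a ^ n := by
  rw [cnt]
  rw [Finset.filter_true_of_mem (fun _ _ => Nat.zero_le _)]
  simp [Finset.card_univ]

lemma cnt_base (k : ℕ) (hk : 1 ≤ k) (seen : Finset (Fin a)) : cnt a 0 k seen = 0 := by
  rw [cnt, Finset.card_eq_zero]
  ext S
  simp only [Finset.mem_filter, Finset.mem_univ, true_and, Finset.notMem_empty, iff_false]
  rw [List.ofFn_zero]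
  show ¬ k ≤ 0
  omega

lemma cnt_succ (n k : ℕ) (hk : 1 ≤ k) (seen : Finset (Fin a)) :
    cnt a (n+1) k seen = ∑ c : Fin a,
      (if insert c seen = Finset.univ then cnt a n (k-1) ∅ else cnt a n k (insert c seen)) := by
  rw [cnt]
  refine (card_filter_succ n (fun l => k ≤ bl a seen l)).trans ?_
  apply Finset.sum_congr rfl
  intro c _
  by_cases hc : insert c seen = Finset.univ
  · rw [if_pos hc, cnt]
    congr 1
    apply Finset.filter_congr
    intro S _
    have hbl : bl a seen (c :: List.ofFn S) = bl a ∅ (List.ofFn S) + 1 := by rw [bl, if_pos hc]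
    rw [hbl]
    exact ⟨fun h => by omega, fun h => by omega⟩
  · rw [if_neg hc, cnt]
    congr 1
    apply Finset.filter_congr
    intro S _
    have : bl a seen (c :: List.ofFn S) = bl a (insert c seen) (List.ofFn S) := by
      rw [bl, if_neg hc]
    rw [this]

noncomputable def psi (a : ℕ) (x : ℝ) : ℕ → ℝ
  | 0 => 1
  | j+1 => ((j+1 : ℝ) * x) / ((a:ℝ) - ((a:ℝ) - (j+1)) * x) * psi a x j


lemma denom_pos {x : ℝ} (hx0 : 0 < x) (hx1 : x ≤ 1) (ha : 0 < a) (j : ℕ) :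
    0 < (a:ℝ) - ((a:ℝ) - (j+1)) * x := by
  rcases le_or_gt ((a:ℝ) - (j+1)) 0 with h | h
  · nlinarith
  · nlinarith

lemma psi_pos {x : ℝ} (hx0 : 0 < x) (hx1 : x ≤ 1) (ha : 0 < a) : ∀ j, 0 < psi a x j := by
  intro j
  induction j with
  | zero => norm_num [psi]
  | succ j ih =>
    rw [psi]
    apply mul_pos _ ih
    apply div_pos (by positivity) (denom_pos hx0 hx1 ha j)

-- key identity: for j ≥ 1,  ((a:ℝ)/x) * psi j = (a - j) * psi j + j * psi (j-1)
lemma psi_rec {x : ℝ} (hx0 : 0 < x) (hx1 : x ≤ 1) (ha : 0 < a) (j : ℕ) :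
    ((a:ℝ)/x) * psi a x (j+1) = ((a:ℝ) - (j+1)) * psi a x (j+1) + ((j:ℝ)+1) * psi a x j := by
  have hd := denom_pos hx0 hx1 ha j
  have hd' := hd.ne'
  have hx' := hx0.ne'
  have hd2 : (a:ℝ) - a*x + x + x*j ≠ 0 := by intro h; apply hd'; linarith
  rw [psi]
  field_simp
  linear_combination (psi a x j) * (mul_inv_cancel₀ hd2)

lemma main_bound (ha : 2 ≤ a) {x : ℝ} (hx0 : 0 < x) (hx1 : x ≤ 1) :
    ∀ (n k : ℕ) (seen : Finset (Fin a)), 1 ≤ k → seen ≠ univ →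
    (cnt a n k seen : ℝ) ≤ ((a:ℝ)/x)^n * psi a x (a - seen.card) * (psi a x a)^(k-1) := by
  have ha0 : 0 < a := by omega
  have haR : (0:ℝ) < a := by exact_mod_cast ha0
  intro n
  induction n with
  | zero =>
    intro k seen hk hs
    rw [cnt_base k hk seen]
    push_cast
    have := psi_pos hx0 hx1 ha0 (a - seen.card)
    have := psi_pos hx0 hx1 ha0 a
    positivity
  | succ n ihn =>
    intro k seen hk hs
    have hcard : seen.card < a := by
      have := (Finset.card_lt_iff_ne_univ seen).mpr hs
      simpa using this
    have hemp : (∅ : Finset (Fin a)) ≠ univ := by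
      intro h
      have : (0:ℕ) = a := by
        have := congrArg Finset.card h
        simpa using this
      omega
    set j : ℕ := a - seen.card with hj
    have hj1 : 1 ≤ j := by omega
    have hterm : ∀ c : Fin a,
        (if insert c seen = univ then ((cnt a n (k-1) ∅ : ℕ) : ℝ)
          else ((cnt a n k (insert c seen) : ℕ) : ℝ))
        ≤ ((a:ℝ)/x)^n * (psi a x a)^(k-1) *
            (if c ∈ seen then psi a x j else psi a x (j-1)) := by
      intro c
      by_cases hc : insert c seen = univ
      · have hcm : c ∉ seen := by
          intro hmem
          exact hs (by rwa [Finset.insert_eq_self.mpr hmem] at hc)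
        have hcc : seen.card + 1 = a := by
          have := congrArg Finset.card hc
          rw [Finset.card_insert_of_notMem hcm] at this
          simpa using this
        have hjeq : j = 1 := by omega
        rw [if_pos hc, if_neg hcm, hjeq]
        show ((cnt a n (k-1) ∅ : ℕ) : ℝ) ≤ _ * psi a x 0
        rcases Nat.lt_or_ge k 2 with hk2 | hk2
        · have hk1 : k = 1 := by omega
          subst hk1
          rw [cnt_zero]
          push_cast
          have h1 : ((a:ℝ))^n ≤ ((a:ℝ)/x)^n := by
            apply pow_le_pow_left₀ (by positivity)
            rw [le_div_iff₀ hx0]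
            nlinarith
          simpa [psi] using h1
        · have h1 : 1 ≤ k - 1 := by omega
          have hih := ihn (k-1) ∅ h1 hemp
          rw [Finset.card_empty, Nat.sub_zero] at hih
          refine hih.trans (le_of_eq ?_)
          have hpow : (psi a x a)^(k-1) = psi a x a * (psi a x a)^(k-1-1) := by
            rw [← pow_succ']
            congr 1
            omega
          rw [hpow]
          simp only [psi]
          ring
      · rw [if_neg hc]
        by_cases hcm : c ∈ seen
        · rw [if_pos hcm, Finset.insert_eq_self.mpr hcm]
          refine (ihn k seen hk hs).trans (le_of_eq ?_)
          ring
        · rw [if_neg hcm]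
          have hcc : (insert c seen).card = seen.card + 1 := Finset.card_insert_of_notMem hcm
          have hih := ihn k (insert c seen) hk hc
          rw [hcc] at hih
          have hjj : a - (seen.card + 1) = j - 1 := by omega
          rw [hjj] at hih
          refine hih.trans (le_of_eq ?_)
          ring
    rw [cnt_succ n k hk seen]
    push_cast
    refine le_trans (Finset.sum_le_sum (fun c _ => hterm c)) ?_
    have e : (∑ c : Fin a, ((a:ℝ)/x)^n * (psi a x a)^(k-1) *
          (if c ∈ seen then psi a x j else psi a x (j-1)))
        = ((a:ℝ)/x)^n * (psi a x a)^(k-1) *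
          ((seen.card : ℝ) * psi a x j + (j : ℝ) * psi a x (j-1)) := by
      rw [← Finset.mul_sum]
      congr 1
      rw [← Finset.sum_add_sum_compl seen]
      have e1 : ∑ c ∈ seen, (if c ∈ seen then psi a x j else psi a x (j-1)) =
          (seen.card : ℝ) * psi a x j := by
        rw [Finset.sum_congr rfl (fun c hc => if_pos hc), Finset.sum_const, nsmul_eq_mul]
      have e2 : ∑ c ∈ seenᶜ, (if c ∈ seen then psi a x j else psi a x (j-1)) =
          (j : ℝ) * psi a x (j-1) := by
        rw [Finset.sum_congr rfl (fun c hc => if_neg (Finset.mem_compl.mp hc)),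
          Finset.sum_const, nsmul_eq_mul, Finset.card_compl]
        simp [hj]
      rw [e1, e2]
    rw [e]
    apply le_of_eq
    have hrec := psi_rec hx0 hx1 ha0 (j-1)
    have hjj : j - 1 + 1 = j := by omega
    rw [hjj] at hrec
    have hj2 : ((j - 1 : ℕ) : ℝ) + 1 = (j : ℝ) := by
      push_cast [Nat.cast_sub hj1]; ring
    rw [hj2] at hrec
    have hcast : ((seen.card : ℝ)) = (a:ℝ) - (j:ℝ) := by
      have hcj : ((j:ℝ)) = (a:ℝ) - (seen.card : ℝ) := by
        rw [hj]; push_cast [Nat.cast_sub (le_of_lt hcard)]; ring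
      rw [hcj]; ring
    rw [hcast]
    have hfin : ((a:ℝ) - (j:ℝ)) * psi a x j + (j:ℝ) * psi a x (j-1) = ((a:ℝ)/x) * psi a x j :=
      hrec.symm
    rw [hfin, pow_succ]
    ring

lemma psi_one (a : ℕ) : ∀ j, psi a 1 j = 1 := by
  intro j
  induction j with
  | zero => rfl
  | succ j ih =>
    rw [psi, ih, mul_one, mul_one, mul_one]
    have : (a:ℝ) - ((a:ℝ) - ((j:ℝ)+1)) = (j:ℝ)+1 := by ring
    rw [this, div_self (by positivity)]


lemma psi_hasDeriv (a : ℕ) : ∀ j : ℕ,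
    HasDerivAt (fun x => psi a x j) (∑ i ∈ Finset.Icc 1 j, (a:ℝ)/i) 1 := by
  intro j
  induction j with
  | zero =>
    simp only [Finset.Icc_self, show Finset.Icc 1 0 = ∅ from rfl, Finset.sum_empty]
    exact hasDerivAt_const 1 1
  | succ j ih =>
    have hnum : HasDerivAt (fun x : ℝ => ((j:ℝ)+1) * x) ((j:ℝ)+1) 1 := by
      simpa using (hasDerivAt_id (1:ℝ)).const_mul ((j:ℝ)+1)
    have hden : HasDerivAt (fun x : ℝ => (a:ℝ) - ((a:ℝ) - ((j:ℝ)+1)) * x)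
        (-((a:ℝ) - ((j:ℝ)+1))) 1 := by
      simpa using ((hasDerivAt_id (1:ℝ)).const_mul ((a:ℝ) - ((j:ℝ)+1))).const_sub (a:ℝ)
    have hdv : ((a:ℝ) - ((a:ℝ) - ((j:ℝ)+1)) * 1) ≠ 0 := by
      rw [mul_one]
      have : (a:ℝ) - ((a:ℝ) - ((j:ℝ)+1)) = (j:ℝ)+1 := by ring
      rw [this]; positivity
    have hg : HasDerivAt (fun x : ℝ => ((j:ℝ)+1) * x / ((a:ℝ) - ((a:ℝ) - ((j:ℝ)+1)) * x))
        ((a:ℝ)/((j:ℝ)+1)) 1 := by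
      have := hnum.div hden hdv
      refine this.congr_deriv ?_
      rw [mul_one, mul_one]
      have e : (a:ℝ) - ((a:ℝ) - ((j:ℝ)+1)) = (j:ℝ)+1 := by ring
      rw [e]
      field_simp
      ring
    have := hg.mul ih
    have hsum : (a:ℝ)/((j:ℝ)+1) * psi a 1 j
        + (((j:ℝ)+1) * 1 / ((a:ℝ) - ((a:ℝ) - ((j:ℝ)+1)) * 1)) * (∑ i ∈ Finset.Icc 1 j, (a:ℝ)/i)
        = ∑ i ∈ Finset.Icc 1 (j+1), (a:ℝ)/i := by
      rw [psi_one]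
      simp only [mul_one]
      have e : (a:ℝ) - ((a:ℝ) - ((j:ℝ)+1)) = (j:ℝ)+1 := by ring
      rw [e, div_self (by positivity : ((j:ℝ)+1) ≠ 0), one_mul]
      rw [Finset.sum_Icc_succ_top (by omega : 1 ≤ j+1)]
      push_cast
      ring
    have heq : (fun x => psi a x (j+1))
        = (fun y : ℝ => ((j:ℝ) + 1) * y / ((a:ℝ) - ((a:ℝ) - ((j:ℝ) + 1)) * y) * psi a y j) := by
      funext y
      rw [psi]
    rw [heq, ← hsum]
    exact this

lemma exists_x (a : ℕ) (ha : 2 ≤ a) (r : ℝ) (hr0 : 0 < r)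
    (hr : r < (a : ℝ) * ∑ i ∈ Finset.Icc 1 a, (1 : ℝ) / i) :
    ∃ x : ℝ, 0 < x ∧ x < 1 ∧ psi a x a < x ^ r := by
  set G : ℝ → ℝ := fun x => psi a x a - x ^ r with hG
  have hrp : HasDerivAt (fun x : ℝ => x ^ r) (r * (1:ℝ) ^ (r - 1)) 1 :=
    Real.hasDerivAt_rpow_const (Or.inl one_ne_zero)
  have hDG : HasDerivAt G ((∑ i ∈ Finset.Icc 1 a, (a:ℝ)/i) - r * (1:ℝ) ^ (r-1)) 1 :=
    (psi_hasDeriv a a).sub hrp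
  have hsum : (∑ i ∈ Finset.Icc 1 a, (a:ℝ)/i) = (a : ℝ) * ∑ i ∈ Finset.Icc 1 a, (1 : ℝ) / i := by
    rw [Finset.mul_sum]
    apply Finset.sum_congr rfl
    intro i _
    rw [div_eq_mul_one_div]
  have hpos : 0 < (∑ i ∈ Finset.Icc 1 a, (a:ℝ)/i) - r * (1:ℝ) ^ (r-1) := by
    rw [Real.one_rpow, mul_one, hsum]
    linarith
  have hG1 : G 1 = 0 := by
    simp only [hG, psi_one, Real.one_rpow, sub_self]
  have hslope := hasDerivAt_iff_tendsto_slope.mp hDG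
  have hslope' : Tendsto (slope G 1) (nhdsWithin 1 (Set.Iio 1))
      (nhds ((∑ i ∈ Finset.Icc 1 a, (a:ℝ)/i) - r * (1:ℝ) ^ (r-1))) :=
    hslope.mono_left (nhdsWithin_mono 1 (fun y hy => ne_of_lt hy))
  have hev : ∀ᶠ y in nhdsWithin 1 (Set.Iio 1), 0 < slope G 1 y :=
    hslope'.eventually (eventually_gt_nhds hpos)
  have hev2 : ∀ᶠ y in nhdsWithin 1 (Set.Iio 1), y ∈ Set.Ioo (0:ℝ) 1 :=
    Ioo_mem_nhdsLT_of_mem (by constructor <;> norm_num)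
  obtain ⟨y, hy1, hy2⟩ := (hev.and hev2).exists
  refine ⟨y, hy2.1, hy2.2, ?_⟩
  have hsl : slope G 1 y = G y / (y - 1) := by
    rw [slope_def_field, hG1]
    ring_nf
  rw [hsl] at hy1
  have hyn : y - 1 < 0 := by linarith [hy2.2]
  have hGy : G y < 0 := by
    by_contra hge
    push_neg at hge
    have : G y / (y - 1) ≤ 0 := div_nonpos_of_nonneg_of_nonpos hge (le_of_lt hyn)
    linarith
  simpa [hG, sub_neg] using hGy


end OmniAux

/-- For fixed `a ≥ 2` and a constant `0 < r < a H_a` (with `r > 0`), with `n = ⌊r k⌋`, the probability that a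
uniformly random string of length `n` over `Fin a` is `k`-omni tends to `0` as `k → ∞`. -/
theorem stmt_13 (a : ℕ) (ha : 2 ≤ a) (r : ℝ)
    (hr0 : 0 < r) (hr : r < (a : ℝ) * ∑ i ∈ Finset.Icc 1 a, (1 : ℝ) / i) :
    Tendsto (fun k : ℕ =>
        ((Finset.univ.filter (fun S : Fin ⌊r * k⌋₊ → Fin a =>
            ∀ T : List (Fin a), T.length = k → T.Sublist (List.ofFn S))).card : ℝ)
          / (a : ℝ) ^ (⌊r * k⌋₊))
      atTop (nhds 0) := by
  have ha0 : 0 < a := by omega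
  have haR : (0:ℝ) < a := by exact_mod_cast ha0
  obtain ⟨x, hx0, hx1, hxlt⟩ := exists_x a ha r hr0 hr
  set φ : ℝ := psi a x a with hφ
  have hφ0 : 0 < φ := psi_pos hx0 hx1.le ha0 a
  have hxr : 0 < x ^ r := Real.rpow_pos_of_pos hx0 r
  set c : ℝ := φ / x ^ r with hc
  have hc0 : 0 ≤ c := le_of_lt (div_pos hφ0 hxr)
  have hc1 : c < 1 := (div_lt_one hxr).mpr hxlt
  set f : ℕ → ℝ := fun k =>
      ((Finset.univ.filter (fun S : Fin ⌊r * k⌋₊ → Fin a =>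
          ∀ T : List (Fin a), T.length = k → T.Sublist (List.ofFn S))).card : ℝ)
        / (a : ℝ) ^ (⌊r * k⌋₊) with hf
  have hnonneg : ∀ k, 0 ≤ f k := by
    intro k
    apply div_nonneg (Nat.cast_nonneg _) (by positivity)
  have hupper : ∀ k, 1 ≤ k → f k ≤ c ^ k := by
    intro k hk
    set n : ℕ := ⌊r * k⌋₊ with hn
    have hemp : (∅ : Finset (Fin a)) ≠ univ := by
      intro h
      have : (0:ℕ) = a := by
        have := congrArg Finset.card h
        simpa using this
      omega
    -- step 1 : omni subset of blocks ≥ k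
    have hsub : (Finset.univ.filter (fun S : Fin n → Fin a =>
          ∀ T : List (Fin a), T.length = k → T.Sublist (List.ofFn S))).card
        ≤ cnt a n k ∅ := by
      apply Finset.card_le_card
      intro S hS
      simp only [Finset.mem_filter, Finset.mem_univ, true_and] at hS ⊢
      exact omni_le_bl ha (List.ofFn S) k hS
    -- step 2 : Chernoff-type bound
    have h2 : (cnt a n k ∅ : ℝ) ≤ ((a:ℝ)/x)^n * φ ^ k := by
      have := main_bound ha hx0 hx1.le n k ∅ hk hemp
      rw [Finset.card_empty, Nat.sub_zero] at this
      refine this.trans (le_of_eq ?_)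
      have : φ * φ^(k-1) = φ^k := by
        rw [← pow_succ']
        congr 1
        omega
      rw [← this]
      ring
    have h3 : f k ≤ ((a:ℝ)/x)^n * φ ^ k / (a:ℝ)^n := by
      rw [hf]
      apply div_le_div_of_nonneg_right ?_ (by positivity)
      calc ((Finset.univ.filter (fun S : Fin n → Fin a =>
            ∀ T : List (Fin a), T.length = k → T.Sublist (List.ofFn S))).card : ℝ)
          ≤ (cnt a n k ∅ : ℝ) := by exact_mod_cast hsub
        _ ≤ _ := h2
    have h4 : ((a:ℝ)/x)^n * φ ^ k / (a:ℝ)^n = φ ^ k / x ^ n := by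
      rw [div_pow]
      field_simp
    have h5 : φ ^ k / x ^ n ≤ φ ^ k / x ^ (r * k) := by
      apply div_le_div_of_nonneg_left (by positivity) (Real.rpow_pos_of_pos hx0 _)
      calc x ^ (r * (k:ℝ)) ≤ x ^ ((n:ℕ):ℝ) :=
            Real.rpow_le_rpow_of_exponent_ge hx0 hx1.le (Nat.floor_le (by positivity))
        _ = x ^ (n:ℕ) := Real.rpow_natCast x n
    have h6 : φ ^ k / x ^ (r * k) = c ^ k := by
      rw [hc, div_pow, ← Real.rpow_natCast (x ^ r) k, ← Real.rpow_mul hx0.le]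
    calc f k ≤ ((a:ℝ)/x)^n * φ ^ k / (a:ℝ)^n := h3
      _ = φ ^ k / x ^ n := h4
      _ ≤ φ ^ k / x ^ (r * k) := h5
      _ = c ^ k := h6
  have hgeom : Tendsto (fun k : ℕ => c ^ k) atTop (nhds 0) :=
    tendsto_pow_atTop_nhds_zero_of_lt_one hc0 hc1
  apply tendsto_of_tendsto_of_tendsto_of_le_of_le' tendsto_const_nhds hgeom
  · exact Eventually.of_forall hnonneg
  · filter_upwards [eventually_ge_atTop 1] with k hk
    exact hupper k hk
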